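/- For the reflecting random walk on ℤ₊ with P(i,i−1)=p > 1/2, P(i,i+1)=q=1−p for i ≥ 1 and P(0,0)=ε, P(0,1)=1−ε, the generating function of the first return time τ to state 0 starting from 0 is b(z) = εz + ((1−ε)/(2q))·(1 − (1 − 4pqz²)^{1/2}) for |z| < 1/√(4pq). If ε < (p−q)/(1+√(q/p)) then the equation b(z)=1 has exactly two real solutions in (−1/√(4pq), 1/√(4pq)): z = 1 and z = −(p−ε)/(pq + (p−ε)²). -/

import Mathlib

open MeasureTheory ProbabilityTheory

/-- The transition kernel of the reflecting random walk on `ℕ`: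
`P(i, i-1) = p`, `P(i, i+1) = q = 1-p` for `i ≥ 1`, and `P(0,0) = ε`, `P(0,1) = 1-ε`. -/
noncomputable def rwKernel (p q ε : ℝ) : Kernel ℕ ℕ :=
  Kernel.ofFunOfCountable (fun i =>
    if i = 0 then
      ENNReal.ofReal ε • Measure.dirac 0 + ENNReal.ofReal (1 - ε) • Measure.dirac 1
    else
      ENNReal.ofReal p • Measure.dirac (i - 1) + ENNReal.ofReal q • Measure.dirac (i + 1))

/-- `tauDist κ C n x = P^x(τ = n)` where `τ = inf {n ≥ 1 : X_n ∈ C}` for the Markov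
chain with transition kernel `κ`. -/
noncomputable def tauDist {S : Type*} [MeasurableSpace S] (κ : Kernel S S) (C : Set S) :
    ℕ → S → ℝ
  | 0 => fun _ => 0
  | 1 => fun x => (κ x C).toReal
  | n + 2 => fun x => ∫ y, Set.indicator Cᶜ (tauDist κ C (n + 1)) y ∂(κ x)


def Mb : ℕ → ℕ → ℕ
  | 0, _ => 1
  | _+1, 0 => 0
  | m+1, 1 => Mb m 2
  | m+1, (i+2) => Mb (m+1) (i+1) + Mb m (i+3)
  termination_by m i => (m, i)

lemma Mb_zero (i : ℕ) : Mb 0 i = 1 := by simp [Mb]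
lemma Mb_succ_zero (m : ℕ) : Mb (m+1) 0 = 0 := by simp [Mb]
lemma Mb_succ_one (m : ℕ) : Mb (m+1) 1 = Mb m 2 := by simp [Mb]
lemma Mb_succ_succ (m i : ℕ) : Mb (m+1) (i+2) = Mb (m+1) (i+1) + Mb m (i+3) := by
  conv_lhs => rw [Mb]

lemma Mb_val (m : ℕ) : ∀ i : ℕ, (i + 2*m) * Mb m i = i * Nat.choose (i + 2*m) m := by
  induction m with
  | zero => intro i; simp [Mb_zero]
  | succ m ih =>
    intro i
    induction i using Nat.strong_induction_on with
    | _ i ihi =>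
      match i with
      | 0 => simp [Mb_succ_zero]
      | 1 =>
        have A := ih 2
        have B := Nat.add_one_mul_choose_eq (2*m+2) m
        have key : (2*m+2) * ((1 + 2*(m+1)) * Mb (m+1) 1) =
            (2*m+2) * (1 * Nat.choose (1 + 2*(m+1)) (m+1)) := by
          rw [Mb_succ_one, show (1 + 2*(m+1)) = 2*m+2+1 from by omega]
          rw [show 2+2*m = 2*m+2 from by omega] at A
          zify at A B ⊢
          push_cast [Nat.succ_eq_add_one] at A B ⊢
          linear_combination (2*(m:ℤ)+3) * A + 2 * B
        exact Nat.eq_of_mul_eq_mul_left (by omega) key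
      | (i+2) =>
        have A := ihi (i+1) (by omega)
        have B := ih (i+3)
        have C : Nat.choose (i+2*m+3) (m+1) * (m+1) = Nat.choose (i+2*m+3) m * (i+m+3) := by
          rw [Nat.choose_succ_right_eq]
          congr 1
          omega
        have P : Nat.choose (i+2+2*(m+1)) (m+1) =
            Nat.choose (i+2*m+3) m + Nat.choose (i+2*m+3) (m+1) := by
          rw [show i+2+2*(m+1) = (i+2*m+3) + 1 from by omega, Nat.choose_succ_succ']
        have key : (i+2*m+3) * ((i+2 + 2*(m+1)) * Mb (m+1) (i+2)) =
            (i+2*m+3) * ((i+2) * Nat.choose (i+2+2*(m+1)) (m+1)) := by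
          rw [Mb_succ_succ, P]
          rw [show (i+1+2*(m+1)) = i+2*m+3 from by omega] at A
          rw [show (i+3+2*m) = i+2*m+3 from by omega] at B
          zify at A B C ⊢
          linear_combination ((i:ℤ)+2*m+4) * A + ((i:ℤ)+2*m+4) * B - 2 * C
        exact Nat.eq_of_mul_eq_mul_left (by omega) key

lemma Mb_one (m : ℕ) : Mb m 1 = catalan m := by
  have h := Mb_val m 1
  have hsym : Nat.choose (1 + 2*m) m = Nat.choose (2*m+1) (m+1) := by
    rw [show 1+2*m = 2*m+1 from by omega, ← Nat.choose_symm (show m+1 ≤ 2*m+1 from by omega)]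
    congr 1
    omega
  have h2 := Nat.add_one_mul_choose_eq (2*m) m
  have h3 := succ_mul_catalan_eq_centralBinom m
  rw [Nat.centralBinom] at h3
  have key : (1+2*m) * ((m+1) * Mb m 1) = (1+2*m) * ((m+1) * catalan m) := by
    rw [hsym] at h
    zify at h h2 h3 ⊢
    push_cast [Nat.succ_eq_add_one] at h2 ⊢
    linear_combination ((m:ℤ)+1) * h - h2 - (2*(m:ℤ)+1) * h3
  have := Nat.eq_of_mul_eq_mul_left (show 0 < 1+2*m from by omega) key
  exact Nat.eq_of_mul_eq_mul_left (by omega) this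


lemma rwKernel_apply (p q ε : ℝ) (x : ℕ) : rwKernel p q ε x =
    if x = 0 then
      ENNReal.ofReal ε • Measure.dirac 0 + ENNReal.ofReal (1 - ε) • Measure.dirac 1
    else
      ENNReal.ofReal p • Measure.dirac (x - 1) + ENNReal.ofReal (q) • Measure.dirac (x + 1) := rfl

lemma integrable_dirac' (f : ℕ → ℝ) (u : ℕ) : Integrable f (Measure.dirac u) := by
  constructor
  · exact (Measurable.of_discrete (f := f)).aestronglyMeasurable
  · rw [HasFiniteIntegral, lintegral_dirac]
    exact ENNReal.coe_lt_top

lemma integral_two_point (f : ℕ → ℝ) (a b : ℝ) (ha : 0 ≤ a) (hb : 0 ≤ b) (u v : ℕ) :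
    ∫ y, f y ∂(ENNReal.ofReal a • Measure.dirac u + ENNReal.ofReal b • Measure.dirac v) =
      a * f u + b * f v := by
  rw [integral_add_measure ((integrable_dirac' f u).smul_measure ENNReal.ofReal_ne_top)
      ((integrable_dirac' f v).smul_measure ENNReal.ofReal_ne_top),
    integral_smul_measure, integral_smul_measure, integral_dirac, integral_dirac,
    ENNReal.toReal_ofReal ha, ENNReal.toReal_ofReal hb, smul_eq_mul, smul_eq_mul]

/-- closed form for `tauDist (rwKernel p q ε) {0}`. -/
noncomputable def D (p q ε : ℝ) : ℕ → ℕ → ℝ := fun n i =>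
  if i = 0 then
    (if n = 1 then ε else
     if 2 ≤ n ∧ n % 2 = 0 then (1-ε) * catalan ((n-2)/2) * p^((n-2)/2+1) * q^((n-2)/2) else 0)
  else if i ≤ n ∧ (n - i) % 2 = 0 then
    (Mb ((n-i)/2) i : ℝ) * p^((n-i)/2+i) * q^((n-i)/2) else 0

variable (p q ε : ℝ)

lemma D_eval (m i : ℕ) (hi : i ≠ 0) :
    D p q ε (i + 2*m) i = (Mb m i : ℝ) * p^(m+i) * q^m := by
  unfold D
  rw [if_neg hi, if_pos ⟨by omega, by omega⟩, show (i+2*m-i)/2 = m from by omega]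

lemma D_zero_of (n i : ℕ) (hi : i ≠ 0) (h : ¬(i ≤ n ∧ (n-i) % 2 = 0)) : D p q ε n i = 0 := by
  unfold D
  rw [if_neg hi, if_neg h]

lemma D0_eval (m : ℕ) : D p q ε (2*m+2) 0 = (1-ε) * catalan m * p^(m+1) * q^m := by
  unfold D
  rw [if_pos rfl, if_neg (by omega), if_pos ⟨by omega, by omega⟩,
    show (2*m+2-2)/2 = m from by omega]

lemma D0_one : D p q ε 1 0 = ε := by unfold D; rw [if_pos rfl, if_pos rfl]

lemma D0_zero (n : ℕ) (h : n ≠ 1 ∧ ¬(2 ≤ n ∧ n % 2 = 0)) : D p q ε n 0 = 0 := by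
  unfold D
  rw [if_pos rfl, if_neg h.1, if_neg h.2]

lemma L0 (n : ℕ) : (1-ε) * D p q ε (n+1) 1 = D p q ε (n+2) 0 := by
  rcases Nat.even_or_odd n with ⟨m, hm⟩ | ⟨m, hm⟩
  · subst hm
    have h1 : D p q ε (m+m+1) 1 = (Mb m 1 : ℝ) * p^(m+1) * q^m := by
      rw [show m+m+1 = 1+2*m from by omega]; exact D_eval p q ε m 1 one_ne_zero
    have h2 : D p q ε (m+m+2) 0 = (1-ε) * catalan m * p^(m+1) * q^m := by
      rw [show m+m+2 = 2*m+2 from by omega]; exact D0_eval p q ε m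
    rw [h1, h2, Mb_one]
    ring
  · subst hm
    rw [D_zero_of p q ε _ 1 one_ne_zero (by omega), D0_zero p q ε _ ⟨by omega, by omega⟩]
    ring

lemma L1 (n : ℕ) : q * D p q ε (n+1) 2 = D p q ε (n+2) 1 := by
  rcases Nat.even_or_odd n with ⟨m, hm⟩ | ⟨m, hm⟩
  · subst hm
    rw [D_zero_of p q ε _ 2 two_ne_zero (by omega), D_zero_of p q ε _ 1 one_ne_zero (by omega)]
    ring
  · subst hm
    have h1 : D p q ε (2*m+1+1) 2 = (Mb m 2 : ℝ) * p^(m+2) * q^m := by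
      rw [show 2*m+1+1 = 2+2*m from by omega]; exact D_eval p q ε m 2 two_ne_zero
    have h2 : D p q ε (2*m+1+2) 1 = (Mb (m+1) 1 : ℝ) * p^(m+1+1) * q^(m+1) := by
      rw [show 2*m+1+2 = 1+2*(m+1) from by omega]; exact D_eval p q ε (m+1) 1 one_ne_zero
    rw [h1, h2, Mb_succ_one]
    push_cast
    ring

lemma L2 (n j : ℕ) : p * D p q ε (n+1) (j+1) + q * D p q ε (n+1) (j+3) = D p q ε (n+2) (j+2) := by
  by_cases H : j ≤ n ∧ (n - j) % 2 = 0
  · obtain ⟨m, hm⟩ : ∃ m, n = j + 2*m := ⟨(n-j)/2, by omega⟩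
    subst hm
    cases m with
    | zero =>
      have h1 : D p q ε (j+2*0+1) (j+1) = (Mb 0 (j+1) : ℝ) * p^(0+(j+1)) * q^0 := by
        rw [show j+2*0+1 = (j+1) + 2*0 from by omega]
        exact D_eval p q ε 0 (j+1) (by omega)
      have h3 : D p q ε (j+2*0+2) (j+2) = (Mb 0 (j+2) : ℝ) * p^(0+(j+2)) * q^0 := by
        rw [show j+2*0+2 = (j+2)+2*0 from by omega]
        exact D_eval p q ε 0 (j+2) (by omega)
      rw [h1, h3, D_zero_of p q ε (j+2*0+1) (j+3) (by omega) (by omega), Mb_zero, Mb_zero]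
      push_cast
      ring
    | succ m =>
      have h1 : D p q ε (j+2*(m+1)+1) (j+1) = (Mb (m+1) (j+1) : ℝ) * p^(m+1+(j+1)) * q^(m+1) := by
        rw [show j+2*(m+1)+1 = (j+1) + 2*(m+1) from by omega]
        exact D_eval p q ε (m+1) (j+1) (by omega)
      have h2 : D p q ε (j+2*(m+1)+1) (j+3) = (Mb m (j+3) : ℝ) * p^(m+(j+3)) * q^m := by
        rw [show j+2*(m+1)+1 = (j+3) + 2*m from by omega]
        exact D_eval p q ε m (j+3) (by omega)
      have h3 : D p q ε (j+2*(m+1)+2) (j+2) = (Mb (m+1) (j+2) : ℝ) * p^(m+1+(j+2)) * q^(m+1) := by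
        rw [show j+2*(m+1)+2 = (j+2)+2*(m+1) from by omega]
        exact D_eval p q ε (m+1) (j+2) (by omega)
      rw [h1, h2, h3, Mb_succ_succ]
      push_cast
      ring
  · rw [D_zero_of p q ε _ (j+1) (by omega) (by omega),
      D_zero_of p q ε _ (j+3) (by omega) (by omega),
      D_zero_of p q ε _ (j+2) (by omega) (by omega)]
    ring

lemma tau_eq (hp0 : 0 ≤ p) (hq0 : 0 ≤ q) (hε0 : 0 ≤ ε) (hε1 : ε ≤ 1) :
    ∀ n x, tauDist (rwKernel p q ε) {0} n x = D p q ε n x := by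
  intro n
  induction n using Nat.strong_induction_on with
  | _ n ih =>
    match n with
    | 0 =>
      intro x
      show (0:ℝ) = D p q ε 0 x
      cases x with
      | zero => rw [D0_zero p q ε 0 ⟨by omega, by omega⟩]
      | succ j => rw [D_zero_of p q ε 0 (j+1) (by omega) (by omega)]
    | 1 =>
      intro x
      show ((rwKernel p q ε) x {0}).toReal = _
      rw [rwKernel_apply]
      match x with
      | 0 =>
        rw [if_pos rfl, D0_one]
        simp [Measure.dirac_apply, ENNReal.toReal_ofReal hε0]
      | 1 =>
        rw [if_neg one_ne_zero, show D p q ε 1 1 = (Mb 0 1 : ℝ) * p^(0+1) * q^0 from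
          D_eval p q ε 0 1 one_ne_zero]
        simp [Measure.dirac_apply, ENNReal.toReal_ofReal hp0, Mb_zero]
      | (j+2) =>
        rw [if_neg (by omega), D_zero_of p q ε 1 (j+2) (by omega) (by omega)]
        simp [Measure.dirac_apply]
    | (k+2) =>
      intro x
      show ∫ y, Set.indicator {0}ᶜ (tauDist (rwKernel p q ε) {0} (k+1)) y ∂(rwKernel p q ε x) = _
      have hind : (Set.indicator ({0}ᶜ : Set ℕ) (tauDist (rwKernel p q ε) {0} (k+1)))
          = fun y => if y = 0 then 0 else D p q ε (k+1) y := by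
        funext y
        rw [Set.indicator_apply]
        by_cases hy : y = 0
        · simp [hy]
        · simp [hy, ih (k+1) (by omega)]
      rw [hind, rwKernel_apply]
      match x with
      | 0 =>
        rw [if_pos rfl, integral_two_point _ ε (1-ε) hε0 (by linarith) 0 1]
        simpa using L0 p q ε k
      | 1 =>
        rw [if_neg one_ne_zero, integral_two_point _ p q hp0 hq0 (1-1) (1+1)]
        simpa using L1 p q ε k
      | (j+2) =>
        rw [if_neg (by omega), integral_two_point _ p q hp0 hq0 (j+2-1) (j+2+1)]
        have := L2 p q ε k j
        simp only [show j+2-1 = j+1 from by omega, show j+2+1 = j+3 from by omega,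
          if_neg (show j+1 ≠ 0 by omega), if_neg (show j+3 ≠ 0 by omega)]
        exact this


lemma catalan_le_four_pow (m : ℕ) : catalan m ≤ 4^m := by
  have h1 : catalan m ≤ m.centralBinom := by
    rw [catalan_eq_centralBinom_div]
    exact Nat.div_le_self _ _
  refine h1.trans ?_
  rw [Nat.centralBinom]
  calc (2*m).choose m ≤ ∑ k ∈ Finset.range (2*m+1), (2*m).choose k :=
        Finset.single_le_sum (fun k _ => Nat.zero_le _) (by simp; omega)
    _ = 4^m := by rw [Nat.sum_range_choose, pow_mul]; norm_num

lemma catalan_norm_summable {w : ℂ} (hw : ‖w‖ < 1/4) :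
    Summable (fun m => ‖(catalan m : ℂ) * w ^ m‖) := by
  refine Summable.of_nonneg_of_le (fun m => norm_nonneg _) (fun m => ?_)
    (summable_geometric_of_lt_one (r := 4 * ‖w‖)
      (by positivity) (by linarith))
  rw [norm_mul, norm_pow]
  have hc : ‖((catalan m : ℕ) : ℂ)‖ ≤ 4^m := by
    rw [Complex.norm_natCast]
    calc (catalan m : ℝ) ≤ ((4:ℕ)^m : ℕ) := by exact_mod_cast catalan_le_four_pow m
      _ = 4^m := by push_cast; ring
  calc ‖((catalan m : ℕ) : ℂ)‖ * ‖w‖^m ≤ 4^m * ‖w‖^m :=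
        mul_le_mul_of_nonneg_right hc (by positivity)
    _ = (4 * ‖w‖)^m := by rw [mul_pow]

lemma catalan_summable {w : ℂ} (hw : ‖w‖ < 1/4) :
    Summable (fun m => (catalan m : ℂ) * w ^ m) :=
  (catalan_norm_summable hw).of_norm

noncomputable def Sc (w : ℂ) : ℂ := ∑' m, (catalan m : ℂ) * w ^ m

lemma Sc_eq {w : ℂ} (hw : ‖w‖ < 1/4) : Sc w = 1 + w * (Sc w)^2 := by
  have hsq : (Sc w)^2 = ∑' n, (catalan (n+1) : ℂ) * w ^ n := by
    rw [Sc, sq, tsum_mul_tsum_eq_tsum_sum_antidiagonal_of_summable_norm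
      (catalan_norm_summable hw) (catalan_norm_summable hw)]
    congr 1
    funext n
    rw [catalan_succ']
    push_cast
    rw [Finset.sum_mul]
    apply Finset.sum_congr rfl
    intro ij hij
    have : ij.1 + ij.2 = n := Finset.HasAntidiagonal.mem_antidiagonal.mp hij
    rw [← this, pow_add]
    ring
  have h2 : w * (Sc w)^2 = ∑' n, (catalan (n+1) : ℂ) * w ^ (n+1) := by
    rw [hsq, ← tsum_mul_left]
    congr 1
    funext n
    ring
  have h3 : Sc w = (catalan 0 : ℂ) * w ^ 0 + ∑' n, (catalan (n+1) : ℂ) * w ^ (n+1) :=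
    (catalan_summable hw).tsum_eq_zero_add
  nth_rewrite 1 [h3]
  rw [h2]
  norm_num

lemma catalan_real_tail_le {t : ℝ} (ht0 : 0 ≤ t) (ht : t < 1/4) :
    ∑' m, (catalan m : ℝ) * t ^ (m+1) ≤ (1 - Real.sqrt (1-4*t))/2 := by
  set r : ℝ := (1 - Real.sqrt (1-4*t))/2 with hrdef
  have hs : Real.sqrt (1-4*t) ^ 2 = 1-4*t := Real.sq_sqrt (by linarith)
  have hs1 : Real.sqrt (1-4*t) ≤ 1 := by
    nlinarith [hs, Real.sqrt_nonneg (1-4*t), ht0]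
  have hr0 : 0 ≤ r := by rw [hrdef]; linarith
  have hfix : t + r^2 = r := by
    rw [hrdef]
    nlinarith [hs]
  have partial_le : ∀ N, ∑ m ∈ Finset.range N, (catalan m : ℝ) * t ^ (m+1) ≤ r := by
    intro N
    induction N with
    | zero => simpa using hr0
    | succ N ihN =>
      rw [Finset.sum_range_succ']
      simp only [catalan_zero, Nat.cast_one, one_mul, pow_one, zero_add]
      have key : ∑ m ∈ Finset.range N, (catalan (m+1) : ℝ) * t ^ (m+1+1) ≤
          (∑ i ∈ Finset.range N, (catalan i : ℝ) * t ^ (i+1))^2 := by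
        have expand : ∀ m, (catalan (m+1) : ℝ) * t ^ (m+1+1) =
            ∑ ij ∈ Finset.HasAntidiagonal.antidiagonal m,
              ((catalan ij.1 : ℝ) * t^(ij.1+1)) * ((catalan ij.2 : ℝ) * t^(ij.2+1)) := by
          intro m
          rw [catalan_succ']
          push_cast
          rw [Finset.sum_mul]
          apply Finset.sum_congr rfl
          intro ij hij
          have : ij.1 + ij.2 = m := Finset.HasAntidiagonal.mem_antidiagonal.mp hij
          rw [← this]
          ring
        simp only [expand]
        rw [← Finset.sum_biUnion]
        · rw [sq, Finset.sum_mul_sum]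
          rw [← Finset.sum_product']
          apply Finset.sum_le_sum_of_subset_of_nonneg
          · intro ij hij
            simp only [Finset.mem_biUnion, Finset.mem_range] at hij
            obtain ⟨m, hm, hij2⟩ := hij
            have := Finset.HasAntidiagonal.mem_antidiagonal.mp hij2
            simp only [Finset.mem_product, Finset.mem_range]
            omega
          · intro ij _ _
            positivity
        · intro a _ b _ hab
          simp only [Function.onFun, Finset.disjoint_left]
          intro ij h1 h2
          exact hab (by
            have e1 := Finset.HasAntidiagonal.mem_antidiagonal.mp h1
            have e2 := Finset.HasAntidiagonal.mem_antidiagonal.mp h2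
            omega)
      calc ∑ m ∈ Finset.range N, (catalan (m+1) : ℝ) * t ^ (m+1+1) + t
          ≤ (∑ i ∈ Finset.range N, (catalan i : ℝ) * t ^ (i+1))^2 + t := by linarith
        _ ≤ r^2 + t := by
            have hnn : 0 ≤ ∑ i ∈ Finset.range N, (catalan i : ℝ) * t ^ (i+1) := by
              apply Finset.sum_nonneg; intro i _; positivity
            nlinarith [ihN]
        _ = r := by linarith [hfix]
  exact Summable.tsum_le_of_sum_range_le
    (summable_of_sum_range_le (fun n => by positivity) partial_le) partial_le

lemma two_w_Sc_lt {w : ℂ} (hw : ‖w‖ < 1/4) : ‖2 * w * Sc w‖ < 1 := by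
  have ht0 : 0 ≤ ‖w‖ := norm_nonneg _
  have h1 : w * Sc w = ∑' m, (catalan m : ℂ) * w ^ (m+1) := by
    rw [Sc, ← tsum_mul_left]
    congr 1
    funext m
    ring
  have hsumn : Summable (fun m => ‖(catalan m : ℂ) * w ^ (m+1)‖) := by
    apply Summable.congr ((catalan_norm_summable hw).mul_right (‖w‖))
    intro m
    rw [pow_succ, ← mul_assoc, norm_mul, norm_mul, norm_mul]
  have h2 : ‖w * Sc w‖ ≤ ∑' m, (catalan m : ℝ) * (‖w‖)^(m+1) := by
    rw [h1]
    refine (norm_tsum_le_tsum_norm hsumn).trans (le_of_eq ?_)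
    congr 1
    funext m
    rw [norm_mul, norm_pow, Complex.norm_natCast]
  have h3 := catalan_real_tail_le ht0 hw
  have hs0 : 0 < Real.sqrt (1 - 4 * ‖w‖) := Real.sqrt_pos.mpr (by linarith)
  have : ‖2*w*Sc w‖ = 2 * ‖w * Sc w‖ := by
    rw [show 2*w*Sc w = 2*(w * Sc w) from by ring, norm_mul]
    norm_num
  rw [this]
  linarith [h2.trans h3]

lemma sqrt_one_sub_four_mul {w : ℂ} (hw : ‖w‖ < 1/4) :
    (1 - 4*w) ^ ((2:ℂ)⁻¹) = 1 - 2*w*Sc w := by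
  have habs := two_w_Sc_lt hw
  have hre1 : (2*w*Sc w).re ≤ ‖2*w*Sc w‖ := Complex.re_le_norm _
  have hre : 0 < (1 - 2*w*Sc w).re := by
    simp only [Complex.sub_re, Complex.one_re]
    linarith
  have hsq : (1 - 2*w*Sc w)^(2:ℕ) = 1 - 4*w := by
    have h := Sc_eq hw
    linear_combination (-4*w) * h
  rw [← hsq, Complex.sq_cpow_two_inv hre]

section Main

variable {p q ε : ℝ} (hp : 1/2 < p) (hp1 : p < 1) (hq : q = 1 - p)
  (hε0 : 0 ≤ ε) (hε1 : ε ≤ 1)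

include hp hp1 hq in
lemma pq_lt : 0 < p ∧ 0 < q ∧ 4*p*q < 1 := by
  subst hq
  refine ⟨by linarith, by linarith, ?_⟩
  nlinarith [sq_nonneg (2*p-1), hp]

include hp hp1 hq hε0 hε1 in
theorem part1 (z : ℂ) (hz : ‖z‖ < 1 / Real.sqrt (4 * p * q)) :
    ∑' n : ℕ, ((tauDist (rwKernel p q ε) {0} n 0 : ℝ) : ℂ) * z ^ n =
      (ε : ℂ) * z + (((1 - ε) / (2 * q) : ℝ) : ℂ) *
        (1 - (1 - 4 * (p : ℂ) * (q : ℂ) * z ^ 2) ^ ((1 : ℂ) / 2)) := by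
  obtain ⟨hp0, hq0, hpq1⟩ := pq_lt hp hp1 hq
  set w : ℂ := (p:ℂ) * (q:ℂ) * z^2 with hwdef
  have hs : Real.sqrt (4*p*q) ^ 2 = 4*p*q := Real.sq_sqrt (by positivity)
  have hs0 : 0 < Real.sqrt (4*p*q) := Real.sqrt_pos.mpr (by positivity)
  have habsw : ‖w‖ < 1/4 := by
    have h1 : ‖z‖ * Real.sqrt (4*p*q) < 1 := by
      rw [← lt_div_iff₀ hs0]
      exact hz
    have h2 : ‖z‖ ^ 2 * (4*p*q) < 1 := by
      calc ‖z‖ ^ 2 * (4*p*q) = (‖z‖ * Real.sqrt (4*p*q))^2 := by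
            rw [mul_pow, hs]
        _ < 1 := by
            have h0 : 0 ≤ ‖z‖ * Real.sqrt (4*p*q) :=
              mul_nonneg (norm_nonneg _) hs0.le
            nlinarith [h0, h1]
    have : ‖w‖ = p * q * ‖z‖ ^ 2 := by
      rw [hwdef, norm_mul, norm_mul, norm_pow, Complex.norm_real, Complex.norm_real, Real.norm_eq_abs, Real.norm_eq_abs,
        abs_of_pos hp0, abs_of_pos hq0]
    rw [this]
    nlinarith
  -- the three summands
  have htau : ∀ n, tauDist (rwKernel p q ε) {0} n 0 = D p q ε n 0 :=
    fun n => tau_eq p q ε (by linarith) (by linarith) hε0 hε1 n 0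
  have hg : HasSum (fun m => (catalan m : ℂ) * w ^ m) (Sc w) := (catalan_summable habsw).hasSum
  have hgc : HasSum (fun m => (((1-ε) : ℂ) * p * z^2) * ((catalan m : ℂ) * w ^ m))
      ((((1-ε) : ℂ) * p * z^2) * Sc w) := hg.mul_left _
  set f2 : ℕ → ℂ := fun n => if n = 1 then 0 else ((D p q ε n 0 : ℝ) : ℂ) * z^n with hf2def
  have hcomp : (fun m => f2 (2*m+2)) = fun m => (((1-ε) : ℂ) * p * z^2) * ((catalan m : ℂ) * w ^ m) := by
    funext m
    rw [hf2def]
    simp only [if_neg (show 2*m+2 ≠ 1 by omega)]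
    rw [D0_eval]
    push_cast
    rw [hwdef]
    ring
  have hinj : Function.Injective (fun m : ℕ => 2*m+2) := by
    intro a b h
    have h' : 2*a+2 = 2*b+2 := h
    omega
  have hf2 : HasSum f2 ((((1-ε) : ℂ) * p * z^2) * Sc w) := by
    rw [← Function.Injective.hasSum_iff hinj ?_]
    · rw [show (f2 ∘ fun m : ℕ => 2*m+2) = fun m => f2 (2*m+2) from rfl, hcomp]
      exact hgc
    · intro n hn
      simp only [Set.mem_range, not_exists] at hn
      rw [hf2def]
      by_cases h1 : n = 1
      · simp [h1]
      · simp only [if_neg h1]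
        rw [D0_zero p q ε n ⟨h1, ?_⟩]
        · simp
        · rintro ⟨h2, h3⟩
          obtain ⟨m, hm⟩ : ∃ m, n = 2*m+2 := ⟨(n-2)/2, by omega⟩
          exact hn m hm.symm
  have hf1 : HasSum (fun n => if n = 1 then (ε:ℂ) * z else 0) ((ε:ℂ) * z) :=
    hasSum_ite_eq 1 _
  have hfun : (fun n => (if n = 1 then (ε:ℂ) * z else 0) + f2 n)
      = fun n => ((D p q ε n 0 : ℝ):ℂ) * z^n := by
    funext n
    by_cases h1 : n = 1
    · subst h1
      rw [hf2def]
      simp [D0_one]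
    · rw [hf2def]
      simp [h1]
  have hsum : HasSum (fun n => ((D p q ε n 0 : ℝ) : ℂ) * z^n)
      ((ε:ℂ) * z + (((1-ε) : ℂ) * p * z^2) * Sc w) := by
    rw [← hfun]
    exact hf1.add hf2
  have hLHS : ∑' n : ℕ, ((tauDist (rwKernel p q ε) {0} n 0 : ℝ) : ℂ) * z ^ n
      = (ε:ℂ) * z + (((1-ε) : ℂ) * p * z^2) * Sc w := by
    rw [show (fun n : ℕ => ((tauDist (rwKernel p q ε) {0} n 0 : ℝ) : ℂ) * z ^ n)
      = fun n => ((D p q ε n 0 : ℝ) : ℂ) * z^n from by funext n; rw [htau]]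
    exact hsum.tsum_eq
  rw [hLHS, show (1:ℂ)/2 = (2:ℂ)⁻¹ from one_div 2,
    show 1 - 4 * (p:ℂ) * (q:ℂ) * z ^ 2 = 1 - 4*w from by rw [hwdef]; ring,
    sqrt_one_sub_four_mul habsw]
  have hqne : (q:ℂ) ≠ 0 := by
    simp only [ne_eq, Complex.ofReal_eq_zero]
    linarith
  have : ((1 - ε) / (2 * q) : ℝ) = (1-ε) / (2*q) := rfl
  push_cast
  rw [hwdef]
  field_simp
  ring

end Main

section Part2

variable {p ε : ℝ} (hp : 1/2 < p) (hp1 : p < 1) (hε0 : 0 ≤ ε) (hε1 : ε ≤ 1)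

include hp hp1 hε0 hε1 in
lemma real_b (x : ℝ) (hx : |x| < 1 / Real.sqrt (4 * p * (1-p))) :
    ∑' n : ℕ, tauDist (rwKernel p (1-p) ε) {0} n 0 * x ^ n =
      ε * x + (1 - ε) / (2 * (1-p)) * (1 - Real.sqrt (1 - 4*p*(1-p)*x^2)) := by
  have hp0 : 0 < p := by linarith
  have hq0 : 0 < 1 - p := by linarith
  have hs : Real.sqrt (4*p*(1-p)) ^ 2 = 4*p*(1-p) := Real.sq_sqrt (by positivity)
  have hs0 : 0 < Real.sqrt (4*p*(1-p)) := Real.sqrt_pos.mpr (by positivity)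
  have hrad : 0 ≤ 1 - 4*p*(1-p)*x^2 := by
    have h1 : |x| * Real.sqrt (4*p*(1-p)) < 1 := by
      rw [← lt_div_iff₀ hs0]; exact hx
    nlinarith [abs_nonneg x, hs0.le, sq_abs x, mul_nonneg (abs_nonneg x) hs0.le]
  have h := part1 hp hp1 rfl hε0 hε1 (z := (x:ℂ)) (by rwa [Complex.norm_real, Real.norm_eq_abs])
  have hLHS : ∑' n : ℕ, ((tauDist (rwKernel p (1-p) ε) {0} n 0 : ℝ) : ℂ) * (x:ℂ) ^ n
      = ((∑' n : ℕ, tauDist (rwKernel p (1-p) ε) {0} n 0 * x ^ n : ℝ) : ℂ) := by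
    rw [Complex.ofReal_tsum]
    congr 1
    funext n
    push_cast
    ring
  rw [hLHS] at h
  have hcpow : (1 - 4 * (p:ℂ) * ((1-p:ℝ):ℂ) * (x:ℂ) ^ 2) ^ ((1 : ℂ) / 2)
      = ((Real.sqrt (1 - 4*p*(1-p)*x^2) : ℝ) : ℂ) := by
    have e1 : (1 - 4 * (p:ℂ) * ((1-p:ℝ):ℂ) * (x:ℂ) ^ 2) = (((1 - 4*p*(1-p)*x^2 : ℝ)) : ℂ) := by
      push_cast
      ring
    rw [e1, Real.sqrt_eq_rpow, Complex.ofReal_cpow hrad]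
    norm_num
  rw [hcpow] at h
  have : ((∑' n : ℕ, tauDist (rwKernel p (1-p) ε) {0} n 0 * x ^ n : ℝ) : ℂ)
      = (((ε * x + (1 - ε) / (2 * (1-p)) * (1 - Real.sqrt (1 - 4*p*(1-p)*x^2)) : ℝ)) : ℂ) := by
    rw [h]
    push_cast
    ring
  exact_mod_cast this



include hp hp1 hε0 hε1 in
set_option maxHeartbeats 1000000 in
lemma part2 (hεh : ε < (p - (1-p)) / (1 + Real.sqrt ((1-p) / p))) :
    {x : ℝ | x ∈ Set.Ioo (-(1 / Real.sqrt (4 * p * (1-p)))) (1 / Real.sqrt (4 * p * (1-p))) ∧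
        ∑' n : ℕ, tauDist (rwKernel p (1-p) ε) {0} n 0 * x ^ n = 1} =
      {1, -(p - ε) / (p * (1-p) + (p - ε) ^ 2)} := by
  have hp0 : 0 < p := by linarith
  have hq0 : 0 < 1 - p := by linarith
  set g : ℝ := Real.sqrt (p * (1-p)) with hgdef
  have hg2 : g^2 = p * (1-p) := Real.sq_sqrt (by positivity)
  have hg0 : 0 < g := Real.sqrt_pos.mpr (by positivity)
  have hsp2 : Real.sqrt p ^ 2 = p := Real.sq_sqrt hp0.le
  have hsq2 : Real.sqrt (1-p) ^ 2 = 1-p := Real.sq_sqrt hq0.le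
  have hsp0 : 0 < Real.sqrt p := Real.sqrt_pos.mpr hp0
  have hsq0 : 0 < Real.sqrt (1-p) := Real.sqrt_pos.mpr hq0
  have hgsp : g = Real.sqrt p * Real.sqrt (1-p) := Real.sqrt_mul hp0.le _
  -- the hypothesis is equivalent to ε < p - g
  have hεp : ε < p - g := by
    have hden : 0 < 1 + Real.sqrt ((1-p)/p) := by positivity
    have hdiv : Real.sqrt ((1-p)/p) = Real.sqrt (1-p) / Real.sqrt p := Real.sqrt_div hq0.le p
    have hkey : (p - (1-p)) / (1 + Real.sqrt ((1-p)/p)) = p - g := by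
      rw [hdiv, div_eq_iff (by positivity), hgsp]
      field_simp
      ring_nf
      linear_combination Real.sqrt (1-p) * hsp2 + Real.sqrt p * hsq2
    rwa [hkey] at hεh
  have hε1' : ε < 1 := by nlinarith [hg0]
  have hA0 : 0 < 1 - ε := by linarith
  have hu : g < p - ε := by linarith
  have hu0 : 0 < p - ε := by linarith
  have hK : 0 < p*(1-p) + (p-ε)^2 := by positivity
  have hs4 : Real.sqrt (4*p*(1-p)) = 2*g := by
    rw [show 4*p*(1-p) = (2*g)^2 from by nlinarith [hg2], Real.sqrt_sq (by positivity)]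
  have hg1 : 2*g < 1 := by nlinarith [hg2, sq_nonneg (2*p-1), hg0]
  ext x
  simp only [Set.mem_setOf_eq, Set.mem_Ioo, Set.mem_insert_iff, Set.mem_singleton_iff, hs4]
  constructor
  · rintro ⟨⟨h1, h2⟩, heq⟩
    have habs : |x| < 1 / Real.sqrt (4*p*(1-p)) := by
      rw [hs4, abs_lt]
      exact ⟨by linarith, h2⟩
    rw [real_b hp hp1 hε0 hε1 x habs] at heq
    set s := Real.sqrt (1-4*p*(1-p)*x^2) with hsdef
    have h2' : x * (2*g) < 1 := (lt_div_iff₀ (by positivity)).mp h2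
    have h1' : -1 < x * (2*g) := by
      have h3 := mul_lt_mul_of_pos_right h1 (show (0:ℝ) < 2*g from by positivity)
      have e : -(1 / (2*g)) * (2*g) = -1 := by field_simp
      rwa [e] at h3
    have hxb : (x*(2*g))^2 < 1 := by nlinarith [h1', h2']
    have hrad : 0 ≤ 1-4*p*(1-p)*x^2 := by
      have e : 4*p*(1-p)*x^2 = (x*(2*g))^2 := by linear_combination (-(4*x^2)) * hg2
      linarith [e, hxb]
    have hs2 : s^2 = 1-4*p*(1-p)*x^2 := Real.sq_sqrt hrad
    have hs0 : 0 ≤ s := Real.sqrt_nonneg _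
    have hAs : (1-ε)*s = (1-ε) - 2*(1-p)*(1-ε*x) := by
      field_simp at heq
      linarith
    have h4 : (4*(1-p)) * ((x-1)*((p*(1-p)+(p-ε)^2)*x + (p-ε))) = 0 := by
      linear_combination (-((1-ε)*s + ((1-ε) - 2*(1-p)*(1-ε*x)))) * hAs + (1-ε)^2 * hs2
    have hquad : (x-1)*((p*(1-p)+(p-ε)^2)*x + (p-ε)) = 0 :=
      (mul_eq_zero.mp h4).resolve_left (by positivity)
    rcases mul_eq_zero.mp hquad with h | h
    · left
      linarith
    · right
      rw [eq_div_iff hK.ne']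
      linarith
  · have hb1 : (p-ε)/(p*(1-p)+(p-ε)^2) < 1/(2*g) := by
      rw [div_lt_div_iff₀ hK (by positivity)]
      nlinarith [mul_pos (sub_pos.mpr hu) (sub_pos.mpr hu), hg2]
    rintro (rfl | rfl)
    · have hpos : (0:ℝ) < 1/(2*g) := by positivity
      refine ⟨⟨by linarith, by rw [lt_div_iff₀ (by positivity)]; linarith⟩, ?_⟩
      have habs : |(1:ℝ)| < 1 / Real.sqrt (4*p*(1-p)) := by
        rw [hs4, abs_one, lt_div_iff₀ (by positivity)]
        linarith
      rw [real_b hp hp1 hε0 hε1 1 habs,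
        show 1-4*p*(1-p)*(1:ℝ)^2 = (2*p-1)^2 from by ring, Real.sqrt_sq (by linarith)]
      field_simp
      ring
    · constructor
      · constructor
        · rw [neg_div]
          exact neg_lt_neg hb1
        · calc -(p-ε)/(p*(1-p)+(p-ε)^2) < 0 := div_neg_of_neg_of_pos (by linarith) hK
            _ < 1/(2*g) := by positivity
      · set x₀ : ℝ := -(p-ε)/(p*(1-p)+(p-ε)^2) with hx0def
        have habs : |x₀| < 1 / Real.sqrt (4*p*(1-p)) := by
          rw [hs4, abs_div, abs_neg, abs_of_pos hu0, abs_of_pos hK]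
          exact hb1
        have hR : 0 ≤ (1-ε) - 2*(1-p)*(1-ε*x₀) := by
          have key : ((1-ε) - 2*(1-p)*(1-ε*x₀))*(p*(1-p)+(p-ε)^2) =
              ((p-ε)+(1-p))*((p-ε)^2 - p*(1-p)) := by
            rw [hx0def]
            field_simp
            ring
          have hpos2 : 0 < (p-ε)^2 - p*(1-p) := by nlinarith [hu, hg0, hg2]
          have hcpos : 0 < ((p-ε)+(1-p)) * ((p-ε)^2 - p*(1-p)) :=
            mul_pos (by linarith) hpos2
          by_contra hcon
          push_neg at hcon
          have h6 : ((1-ε) - 2*(1-p)*(1-ε*x₀))*(p*(1-p)+(p-ε)^2) ≤ 0 :=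
            mul_nonpos_of_nonpos_of_nonneg (by linarith) hK.le
          linarith [key]
        have hs₀ : Real.sqrt (1-4*p*(1-p)*x₀^2) = ((1-ε) - 2*(1-p)*(1-ε*x₀))/(1-ε) := by
          rw [show 1-4*p*(1-p)*x₀^2 = (((1-ε) - 2*(1-p)*(1-ε*x₀))/(1-ε))^2 from ?_]
          · exact Real.sqrt_sq (div_nonneg hR hA0.le)
          · rw [hx0def]
            field_simp
            ring
        rw [real_b hp hp1 hε0 hε1 x₀ habs, hs₀]
        field_simp
        ring

end Part2

theorem stmt19 (p q ε : ℝ) (hp : 1 / 2 < p) (hp1 : p < 1) (hq : q = 1 - p)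
    (hε0 : 0 ≤ ε) (hε1 : ε ≤ 1) :
    (∀ z : ℂ, ‖z‖ < 1 / Real.sqrt (4 * p * q) →
      ∑' n : ℕ, ((tauDist (rwKernel p q ε) {0} n 0 : ℝ) : ℂ) * z ^ n =
        (ε : ℂ) * z + (((1 - ε) / (2 * q) : ℝ) : ℂ) *
          (1 - (1 - 4 * (p : ℂ) * (q : ℂ) * z ^ 2) ^ ((1 : ℂ) / 2))) ∧
    (ε < (p - q) / (1 + Real.sqrt (q / p)) →
      {x : ℝ | x ∈ Set.Ioo (-(1 / Real.sqrt (4 * p * q))) (1 / Real.sqrt (4 * p * q)) ∧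
          ∑' n : ℕ, tauDist (rwKernel p q ε) {0} n 0 * x ^ n = 1} =
        {1, -(p - ε) / (p * q + (p - ε) ^ 2)}) := by
  subst hq
  constructor
  · intro z hz
    exact part1 hp hp1 rfl hε0 hε1 z hz
  · intro hεh
    exact part2 hp hp1 hε0 hε1 hεh
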